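/- For all ξ = (ξ₁,ξ₂,ξ₃), η = (η₁,η₂,η₃) ∈ ℝ³ with η₁ ≠ 0, η₂² + η₃² ≠ 0 and 3η₁² − η₂² − η₃² ≠ 0, the following identity holds: ξ₁ = ( 4η₁³(η₂²+η₃²) / (3(η₁²+η₂²+η₃²)(3η₁²−η₂²−η₃²)²) ) · N₃(ξ,η), where N₃(ξ,η) := ((3η₁²+η₂²+η₃²)/η₁²)(∂_{η₁}φ + 2N₁ − N₂) − ((9η₁⁴ + 18η₁²(η₂²+η₃²) + (η₂²+η₃²)²)/(4η₁³(η₂²+η₃²))) ( 2(ξ₁−η₁)N₁ − η₂∂_{η₂}φ − η₃∂_{η₃}φ ). -/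

import Mathlib

noncomputable section

/-- The resonance function φ(ξ,η) = ξ₁|ξ|² − (ξ₁−η₁)|ξ−η|² − η₁|η|². -/
def phiZK (ξ₁ ξ₂ ξ₃ η₁ η₂ η₃ : ℝ) : ℝ :=
  ξ₁ * (ξ₁ ^ 2 + ξ₂ ^ 2 + ξ₃ ^ 2)
    - (ξ₁ - η₁) * ((ξ₁ - η₁) ^ 2 + (ξ₂ - η₂) ^ 2 + (ξ₃ - η₃) ^ 2)
    - η₁ * (η₁ ^ 2 + η₂ ^ 2 + η₃ ^ 2)

/-- ∂_{η₁}φ = 3ξ₁²+ξ₂²+ξ₃²−6ξ₁η₁−2ξ₂η₂−2ξ₃η₃. -/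
def dphi1 (ξ₁ ξ₂ ξ₃ η₁ η₂ η₃ : ℝ) : ℝ :=
  3 * ξ₁ ^ 2 + ξ₂ ^ 2 + ξ₃ ^ 2 - 6 * ξ₁ * η₁ - 2 * ξ₂ * η₂ - 2 * ξ₃ * η₃

/-- ∂_{η₂}φ = 2ξ₁ξ₂−2ξ₁η₂−2η₁ξ₂. -/
def dphi2 (ξ₁ ξ₂ _ξ₃ η₁ η₂ _η₃ : ℝ) : ℝ :=
  2 * ξ₁ * ξ₂ - 2 * ξ₁ * η₂ - 2 * η₁ * ξ₂

/-- ∂_{η₃}φ = 2ξ₁ξ₃−2ξ₁η₃−2η₁ξ₃. -/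
def dphi3 (ξ₁ _ξ₂ ξ₃ η₁ _η₂ η₃ : ℝ) : ℝ :=
  2 * ξ₁ * ξ₃ - 2 * ξ₁ * η₃ - 2 * η₁ * ξ₃

/-- N₁(ξ,η) = (1/(2η₁))(φ − η·∇_ηφ). -/
def N1ZK (ξ₁ ξ₂ ξ₃ η₁ η₂ η₃ : ℝ) : ℝ :=
  (1 / (2 * η₁)) *
    (phiZK ξ₁ ξ₂ ξ₃ η₁ η₂ η₃
      - η₁ * dphi1 ξ₁ ξ₂ ξ₃ η₁ η₂ η₃
      - η₂ * dphi2 ξ₁ ξ₂ ξ₃ η₁ η₂ η₃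
      - η₃ * dphi3 ξ₁ ξ₂ ξ₃ η₁ η₂ η₃)

/-- The quantity N₂(ξ,η) from the space-time resonance decomposition. -/
def N2ZK (ξ₁ ξ₂ ξ₃ η₁ η₂ η₃ : ℝ) : ℝ :=
  (1 / (4 * η₁ ^ 2 * (η₂ ^ 2 + η₃ ^ 2))) *
    ((-(3 * η₁ ^ 2 + η₂ ^ 2 + η₃ ^ 2) * ξ₁ + 2 * η₁ * η₂ * ξ₂ + 2 * η₁ * η₃ * ξ₃)
        * phiZK ξ₁ ξ₂ ξ₃ η₁ η₂ η₃
      + ((3 * η₁ ^ 2 + η₂ ^ 2 + η₃ ^ 2) * ξ₁ - 2 * η₁ * η₂ * ξ₂ - 2 * η₁ * η₃ * ξ₃)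
        * (η₁ * dphi1 ξ₁ ξ₂ ξ₃ η₁ η₂ η₃)
      + (2 * η₁ * η₃ * ξ₂ * ξ₃ - 2 * η₁ * η₂ * ξ₃ ^ 2
          + (3 * η₁ ^ 2 + η₂ ^ 2 + η₃ ^ 2) * η₂ * ξ₁ - 2 * η₁ * (η₂ ^ 2 + η₃ ^ 2) * ξ₂)
        * dphi2 ξ₁ ξ₂ ξ₃ η₁ η₂ η₃
      + (-(2 * η₁ * η₃ * ξ₂ ^ 2) + 2 * η₁ * η₂ * ξ₂ * ξ₃
          + (3 * η₁ ^ 2 + η₂ ^ 2 + η₃ ^ 2) * η₃ * ξ₁ - 2 * η₁ * (η₂ ^ 2 + η₃ ^ 2) * ξ₃)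
        * dphi3 ξ₁ ξ₂ ξ₃ η₁ η₂ η₃)

/-- The quantity N₃(ξ,η) from the space-time resonance decomposition. -/
def N3ZK (ξ₁ ξ₂ ξ₃ η₁ η₂ η₃ : ℝ) : ℝ :=
  ((3 * η₁ ^ 2 + η₂ ^ 2 + η₃ ^ 2) / η₁ ^ 2)
      * (dphi1 ξ₁ ξ₂ ξ₃ η₁ η₂ η₃ + 2 * N1ZK ξ₁ ξ₂ ξ₃ η₁ η₂ η₃ - N2ZK ξ₁ ξ₂ ξ₃ η₁ η₂ η₃)
    - ((9 * η₁ ^ 4 + 18 * η₁ ^ 2 * (η₂ ^ 2 + η₃ ^ 2) + (η₂ ^ 2 + η₃ ^ 2) ^ 2)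
          / (4 * η₁ ^ 3 * (η₂ ^ 2 + η₃ ^ 2)))
      * (2 * (ξ₁ - η₁) * N1ZK ξ₁ ξ₂ ξ₃ η₁ η₂ η₃
          - η₂ * dphi2 ξ₁ ξ₂ ξ₃ η₁ η₂ η₃
          - η₃ * dphi3 ξ₁ ξ₂ ξ₃ η₁ η₂ η₃)

/-- ξ₁ = (4η₁³(η₂²+η₃²)/(3(η₁²+η₂²+η₃²)(3η₁²−η₂²−η₃²)²))·N₃(ξ,η). -/
theorem xi1_resolution (ξ₁ ξ₂ ξ₃ η₁ η₂ η₃ : ℝ) (hη₁ : η₁ ≠ 0)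
    (h23 : η₂ ^ 2 + η₃ ^ 2 ≠ 0) (hcone : 3 * η₁ ^ 2 - η₂ ^ 2 - η₃ ^ 2 ≠ 0) :
    ξ₁ = (4 * η₁ ^ 3 * (η₂ ^ 2 + η₃ ^ 2)
            / (3 * (η₁ ^ 2 + η₂ ^ 2 + η₃ ^ 2) * (3 * η₁ ^ 2 - η₂ ^ 2 - η₃ ^ 2) ^ 2))
          * N3ZK ξ₁ ξ₂ ξ₃ η₁ η₂ η₃ := by
  have hsum : η₁ ^ 2 + η₂ ^ 2 + η₃ ^ 2 ≠ 0 := by positivity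
  have hc2 : (3 * η₁ ^ 2 - η₂ ^ 2 - η₃ ^ 2) ^ 2 ≠ 0 := pow_ne_zero 2 hcone
  unfold N3ZK N2ZK N1ZK phiZK dphi1 dphi2 dphi3
  rw [div_mul_eq_mul_div, eq_div_iff (by positivity)]
  field_simp
  ring
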